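/- Fix δ ≥ −1 and for a > 1 set σ(a) := (8(a+δ))^{−1/2} and R(a) := sup_{x ∈ (0,1)} β_{a,a}(x)/φ_{1/2,σ(a)}(x). Then log R(a) = (δ(δ+1) + 3/4)/(2a) + O(a^{−2}) as a → ∞; that is, there exist constants C > 0 and A > 1 such that for all a ≥ A, |log R(a) − (δ(δ+1) + 3/4)/(2a)| ≤ C/a². -/

import Mathlib

open MeasureTheory

/-- The Beta function `B(a,b) = ∫₀¹ t^{a-1} (1-t)^{b-1} dt`. -/
noncomputable def betaFn (a b : ℝ) : ℝ :=
  ∫ t in (0:ℝ)..1, t ^ (a - 1) * (1 - t) ^ (b - 1)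

/-- Density of the symmetric Beta(a,a) distribution on (0,1). -/
noncomputable def betaSymPDF (a t : ℝ) : ℝ :=
  (betaFn a a)⁻¹ * t ^ (a - 1) * (1 - t) ^ (a - 1)

/-- Density of the normal distribution N(1/2, σ²). -/
noncomputable def gaussPDF (σ x : ℝ) : ℝ :=
  (Real.sqrt (2 * Real.pi * σ ^ 2))⁻¹ * Real.exp (-(x - 1 / 2) ^ 2 / (2 * σ ^ 2))

/-- `R(a) = sup_{x ∈ (0,1)} β_{a,a}(x) / φ_{1/2, σ(a)}(x)` with
`σ(a) = (8(a+δ))^{-1/2}`. -/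
noncomputable def Rratio (δ a : ℝ) : ℝ :=
  ⨆ x : Set.Ioo (0:ℝ) 1, betaSymPDF a x / gaussPDF ((8 * (a + δ)) ^ (-(1:ℝ) / 2)) x

open Filter



lemma betaFn_eq {a : ℝ} (ha : 1 < a) :
    betaFn a a = Real.Gamma a * Real.Gamma a / Real.Gamma (2 * a) := by
  have ha0 : (0:ℝ) < a := by linarith
  have h2a : (0:ℝ) < 2 * a := by linarith
  have key : ((betaFn a a : ℝ) : ℂ) = Complex.betaIntegral a a := by
    rw [betaFn, Complex.betaIntegral, ← intervalIntegral.integral_ofReal]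
    apply intervalIntegral.integral_congr
    intro t ht
    rw [Set.uIcc_of_le (by norm_num : (0:ℝ) ≤ 1)] at ht
    have ht0 : (0:ℝ) ≤ t := ht.1
    have ht1 : (0:ℝ) ≤ 1 - t := by linarith [ht.2]
    push_cast
    rw [Complex.ofReal_cpow ht0, Complex.ofReal_cpow ht1]
    push_cast
    ring
  have hg := Complex.Gamma_mul_Gamma_eq_betaIntegral
    (s := (a:ℂ)) (t := (a:ℂ)) (by simpa using ha0) (by simpa using ha0)
  rw [← key] at hg
  have : ((a:ℂ) + a) = ((2*a : ℝ) : ℂ) := by push_cast; ring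
  rw [this, Complex.Gamma_ofReal, Complex.Gamma_ofReal, ← Complex.ofReal_mul, ← Complex.ofReal_mul]
    at hg
  have hg' : Real.Gamma a * Real.Gamma a = Real.Gamma (2*a) * betaFn a a := by
    exact_mod_cast hg
  have hΓ : Real.Gamma (2*a) ≠ 0 := (Real.Gamma_pos_of_pos h2a).ne'
  field_simp [hg']
  linear_combination -hg'


noncomputable def ggAux (x : ℝ) : ℝ := (Real.Gamma (x+1/2) / Real.Gamma x)^2 / (x - 1/4)

lemma gamma_midpoint {p q : ℝ} (hp : 0 < p) (hq : 0 < q) :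
    Real.Gamma ((p+q)/2) ^ 2 ≤ Real.Gamma p * Real.Gamma q := by
  have h := Real.convexOn_log_Gamma.2 (Set.mem_Ioi.2 hp) (Set.mem_Ioi.2 hq)
    (by norm_num : (0:ℝ) ≤ 1/2) (by norm_num : (0:ℝ) ≤ 1/2) (by norm_num)
  simp only [Function.comp, smul_eq_mul] at h
  have hmid : 0 < (p+q)/2 := by linarith
  have e1 : (1:ℝ)/2*p + 1/2*q = (p+q)/2 := by ring
  rw [e1] at h
  have h2 : Real.log (Real.Gamma ((p+q)/2)) + Real.log (Real.Gamma ((p+q)/2)) ≤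
      Real.log (Real.Gamma p) + Real.log (Real.Gamma q) := by linarith
  have := Real.exp_le_exp.2 h2
  rw [Real.exp_add, Real.exp_add, Real.exp_log (Real.Gamma_pos_of_pos hmid),
    Real.exp_log (Real.Gamma_pos_of_pos hp), Real.exp_log (Real.Gamma_pos_of_pos hq)] at this
  nlinarith [this]

lemma ratio_sq_bounds {x : ℝ} (hx : 1 ≤ x) :
    x - 1/2 ≤ (Real.Gamma (x+1/2) / Real.Gamma x)^2 ∧
      (Real.Gamma (x+1/2) / Real.Gamma x)^2 ≤ x := by
  have hx0 : (0:ℝ) < x := by linarith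
  have hxh : (0:ℝ) < x - 1/2 := by linarith
  have hG : 0 < Real.Gamma x := Real.Gamma_pos_of_pos hx0
  have hGh : 0 < Real.Gamma (x+1/2) := Real.Gamma_pos_of_pos (by linarith)
  have hGmh : 0 < Real.Gamma (x-1/2) := Real.Gamma_pos_of_pos (by linarith)
  have hrec : Real.Gamma (x+1/2) = (x-1/2) * Real.Gamma (x-1/2) := by
    have := Real.Gamma_add_one (s := x - 1/2) (by linarith)
    rw [show x - 1/2 + 1 = x + 1/2 by ring] at this
    exact this
  have hrec2 : Real.Gamma (x+1) = x * Real.Gamma x := Real.Gamma_add_one hx0.ne'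
  constructor
  · have h := gamma_midpoint (p := x - 1/2) (q := x + 1/2) (by linarith) (by linarith)
    rw [show (x - 1/2 + (x+1/2))/2 = x by ring, hrec] at h
    rw [div_pow]
    rw [le_div_iff₀ (by positivity)]
    nlinarith [h, sq_nonneg (Real.Gamma (x+1/2))]
  · have h := gamma_midpoint (p := x) (q := x + 1) hx0 (by linarith)
    rw [show (x + (x+1))/2 = x + 1/2 by ring, hrec2] at h
    rw [div_pow, div_le_iff₀ (by positivity)]
    nlinarith [h]

lemma ggAux_pos {x : ℝ} (hx : 1 ≤ x) : 0 < ggAux x := by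
  have hx0 : (0:ℝ) < x := by linarith
  have hG : 0 < Real.Gamma x := Real.Gamma_pos_of_pos hx0
  have hGh : 0 < Real.Gamma (x+1/2) := Real.Gamma_pos_of_pos (by linarith)
  have : (0:ℝ) < x - 1/4 := by linarith
  unfold ggAux
  positivity

lemma ggAux_bounds {x : ℝ} (hx : 1 ≤ x) :
    (x-1/2)/(x-1/4) ≤ ggAux x ∧ ggAux x ≤ x/(x-1/4) := by
  have h14 : (0:ℝ) < x - 1/4 := by linarith
  obtain ⟨h1, h2⟩ := ratio_sq_bounds hx
  constructor
  · unfold ggAux; gcongr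
  · unfold ggAux
    calc (Real.Gamma (x+1/2) / Real.Gamma x)^2 / (x - 1/4) ≤ x / (x-1/4) := by gcongr
      _ = x/(x-1/4) := rfl

lemma ggAux_succ {x : ℝ} (hx : 1 ≤ x) :
    ggAux (x+1) = ggAux x * (1 - 1/(16*x^2*(x+3/4))) := by
  have hx0 : (0:ℝ) < x := by linarith
  have hG : 0 < Real.Gamma x := Real.Gamma_pos_of_pos hx0
  have hGh : 0 < Real.Gamma (x+1/2) := Real.Gamma_pos_of_pos (by linarith)
  have hrec2 : Real.Gamma (x+1) = x * Real.Gamma x := Real.Gamma_add_one hx0.ne'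
  have hrec : Real.Gamma (x+1+1/2) = (x+1/2) * Real.Gamma (x+1/2) := by
    have := Real.Gamma_add_one (s := x + 1/2) (by positivity)
    rw [show x + 1/2 + 1 = x + 1 + 1/2 by ring] at this
    exact this
  have h14 : (0:ℝ) < x - 1/4 := by linarith
  have e : (1:ℝ) - 1/(16*x^2*(x+3/4)) = ((x+1/2)^2*(x-1/4))/(x^2*(x+3/4)) := by
    field_simp
    ring
  unfold ggAux
  rw [hrec, hrec2, show x+1-1/4 = x+3/4 by ring, e]
  simp only [div_pow, div_div, div_mul_div_comm, mul_pow]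
  rw [div_eq_div_iff (by positivity)
    (mul_ne_zero (mul_ne_zero (by positivity) h14.ne') (by positivity))]
  ring


lemma c_lt_one {y : ℝ} (hy : 1 ≤ y) : 0 < 1 - 1/(16*y^2*(y+3/4)) := by
  have h28 : (28:ℝ) ≤ 16*y^2*(y+3/4) := by nlinarith
  have h0 : (0:ℝ) < 16*y^2*(y+3/4) := by linarith
  have : 1/(16*y^2*(y+3/4)) ≤ 1/28 := by
    rw [div_le_div_iff₀ h0 (by norm_num)]; linarith
  linarith

lemma termbound {y : ℝ} (hy : 2 ≤ y) :
    0 ≤ -Real.log (1 - 1/(16*y^2*(y+3/4))) ∧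
      -Real.log (1 - 1/(16*y^2*(y+3/4))) ≤ 1/(16*(y-1)^2) - 1/(16*y^2) := by
  set c := 1/(16*y^2*(y+3/4)) with hc
  have h0 : (0:ℝ) < 16*y^2*(y+3/4) := by nlinarith
  have hcpos : 0 < c := by positivity
  have hchalf : c ≤ 1/2 := by
    rw [hc, div_le_div_iff₀ h0 (by norm_num)]; nlinarith
  have h1c : 0 < 1 - c := by linarith [c_lt_one (by linarith : (1:ℝ) ≤ y)]
  constructor
  · simp only [neg_nonneg]
    exact Real.log_nonpos (by linarith) (by linarith)
  · have hlog : Real.log ((1-c)⁻¹) ≤ (1-c)⁻¹ - 1 :=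
      Real.log_le_sub_one_of_pos (by positivity)
    have e1 : -Real.log (1-c) = Real.log ((1-c)⁻¹) := (Real.log_inv _).symm
    have h2 : (1-c)⁻¹ ≤ 1 + 2*c := by
      rw [inv_le_iff_one_le_mul₀ h1c]; nlinarith
    have h3 : 2*c ≤ 1/(8*y^3) := by
      rw [hc, mul_one_div, div_le_div_iff₀ h0 (by nlinarith)]
      nlinarith
    have h4 : 1/(8*y^3) ≤ 1/(16*(y-1)^2) - 1/(16*y^2) := by
      rw [div_sub_div _ _ (by nlinarith) (by nlinarith), div_le_div_iff₀ (by nlinarith) (by nlinarith)]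
      nlinarith
    rw [e1]
    linarith

lemma gg_sum {x : ℝ} (hx : 2 ≤ x) (n : ℕ) :
    Real.log (ggAux x) - Real.log (ggAux (x+n)) =
      ∑ k ∈ Finset.range n, (-Real.log (1 - 1/(16*(x+k)^2*((x+k)+3/4)))) := by
  induction n with
  | zero => simp
  | succ n ih =>
    have hn : (0:ℝ) ≤ n := Nat.cast_nonneg n
    have hxn : (1:ℝ) ≤ x + n := by linarith
    have hrec := ggAux_succ hxn
    have hgpos : 0 < ggAux (x+n) := ggAux_pos hxn
    have hcpos := c_lt_one hxn
    rw [Finset.sum_range_succ, ← ih, show x + ((n:ℕ)+1:ℕ) = (x+n)+1 by push_cast; ring, hrec,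
      Real.log_mul hgpos.ne' hcpos.ne']
    ring

lemma sum_bound {x : ℝ} (hx : 2 ≤ x) (n : ℕ) :
    0 ≤ ∑ k ∈ Finset.range n, (-Real.log (1 - 1/(16*(x+k)^2*((x+k)+3/4)))) ∧
      ∑ k ∈ Finset.range n, (-Real.log (1 - 1/(16*(x+k)^2*((x+k)+3/4)))) ≤ 1/(16*(x-1)^2) := by
  have hterm : ∀ k : ℕ, (2:ℝ) ≤ x + k := fun k => by
    have : (0:ℝ) ≤ k := Nat.cast_nonneg k; linarith
  constructor
  · exact Finset.sum_nonneg fun k _ => (termbound (hterm k)).1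
  · calc ∑ k ∈ Finset.range n, (-Real.log (1 - 1/(16*(x+k)^2*((x+k)+3/4))))
        ≤ ∑ k ∈ Finset.range n, (1/(16*(x+(k:ℝ)-1)^2) - 1/(16*(x+((k:ℝ)+1)-1)^2)) := by
          apply Finset.sum_le_sum
          intro k _
          have h := (termbound (hterm k)).2
          have e : x + ((k:ℝ)+1) - 1 = x + k := by ring
          rw [e]
          exact h
      _ = 1/(16*(x+(0:ℕ)-1)^2) - 1/(16*(x+(n:ℕ)-1)^2) := by
          have := Finset.sum_range_sub' (fun k : ℕ => 1/(16*(x+(k:ℝ)-1)^2)) n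
          simpa using this
      _ ≤ 1/(16*(x-1)^2) := by
          have hn : (0:ℝ) ≤ n := Nat.cast_nonneg n
          have : 0 ≤ 1/(16*(x+(n:ℕ)-1)^2) := by positivity
          simp only [Nat.cast_zero, add_zero]
          linarith

lemma log_gg_tendsto {x : ℝ} (hx : 2 ≤ x) :
    Tendsto (fun n : ℕ => Real.log (ggAux (x + n))) atTop (nhds 0) := by
  have hb : Tendsto (fun n : ℕ => x + (n:ℝ) - 1/4) atTop atTop := by
    have : Tendsto (fun n : ℕ => ((n:ℝ)) + (x - 1/4)) atTop atTop :=
      tendsto_atTop_add_const_right _ _ tendsto_natCast_atTop_atTop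
    convert this using 2 with n
    ring
  have hinv : Tendsto (fun n : ℕ => (1/4)/(x+(n:ℝ)-1/4)) atTop (nhds 0) :=
    Tendsto.div_atTop tendsto_const_nhds hb
  have hgg : Tendsto (fun n : ℕ => ggAux (x + n)) atTop (nhds 1) := by
    refine tendsto_of_tendsto_of_tendsto_of_le_of_le
      (g := fun n : ℕ => 1 - (1/4)/(x+(n:ℝ)-1/4)) (h := fun n : ℕ => 1 + (1/4)/(x+(n:ℝ)-1/4))
      ?_ ?_ ?_ ?_
    · simpa using tendsto_const_nhds.sub hinv
    · simpa using tendsto_const_nhds.add hinv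
    · intro n
      have hn : (0:ℝ) ≤ n := Nat.cast_nonneg n
      have h := (ggAux_bounds (x := x + n) (by linarith)).1
      have h14 : (0:ℝ) < x + n - 1/4 := by linarith
      have h2 : 1 - (1/4)/(x+(n:ℝ)-1/4) ≤ (x+(n:ℝ)-1/2)/(x+(n:ℝ)-1/4) := by
        rw [le_div_iff₀ h14, sub_mul, one_mul, div_mul_cancel₀ _ h14.ne']
        linarith
      exact h2.trans h
    · intro n
      have hn : (0:ℝ) ≤ n := Nat.cast_nonneg n
      have h := (ggAux_bounds (x := x + n) (by linarith)).2
      have h14 : (0:ℝ) < x + n - 1/4 := by linarith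
      have h2 : (x+(n:ℝ))/(x+(n:ℝ)-1/4) ≤ 1 + (1/4)/(x+(n:ℝ)-1/4) := by
        rw [div_le_iff₀ h14, add_mul, one_mul, div_mul_cancel₀ _ h14.ne']
        linarith
      exact h.trans h2
  have hcont : ContinuousAt Real.log 1 := Real.continuousAt_log one_ne_zero
  have := (hcont.tendsto.comp hgg)
  simpa [Function.comp_def] using this

lemma log_gg_bound {x : ℝ} (hx : 2 ≤ x) :
    0 ≤ Real.log (ggAux x) ∧ Real.log (ggAux x) ≤ 1/(16*(x-1)^2) := by
  have hsum := gg_sum hx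
  have hS := sum_bound hx
  constructor
  · apply le_of_tendsto' (log_gg_tendsto hx)
    intro n
    have := (hS n).1
    linarith [hsum n]
  · have ht := (log_gg_tendsto hx).add (tendsto_const_nhds (x := (1:ℝ)/(16*(x-1)^2)))
    rw [zero_add] at ht
    exact ge_of_tendsto' ht (fun n => by linarith [hsum n, (hS n).2])

lemma L_approx {x : ℝ} (hx : 2 ≤ x) :
    0 ≤ (Real.log (Real.Gamma (x+1/2)) - Real.log (Real.Gamma x)) - (1/2)*Real.log (x - 1/4) ∧
      (Real.log (Real.Gamma (x+1/2)) - Real.log (Real.Gamma x)) - (1/2)*Real.log (x - 1/4)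
        ≤ 1/(32*(x-1)^2) := by
  have hG : 0 < Real.Gamma x := Real.Gamma_pos_of_pos (by linarith)
  have hGh : 0 < Real.Gamma (x+1/2) := Real.Gamma_pos_of_pos (by linarith)
  have h14 : (0:ℝ) < x - 1/4 := by linarith
  have e : Real.log (ggAux x)
      = 2*((Real.log (Real.Gamma (x+1/2)) - Real.log (Real.Gamma x))) - Real.log (x-1/4) := by
    unfold ggAux
    rw [Real.log_div (by positivity) h14.ne', Real.log_pow,
      Real.log_div hGh.ne' hG.ne']
    push_cast; ring
  obtain ⟨h1, h2⟩ := log_gg_bound hx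
  rw [e] at h1 h2
  have hne : x - 1 ≠ 0 := by intro h; linarith [h]
  have e2 : 1/(16*(x-1)^2) = 2*(1/(32*(x-1)^2)) := by field_simp; ring
  rw [e2] at h2
  constructor <;> linarith


lemma betaFn_pos {a : ℝ} (ha : 1 < a) : 0 < betaFn a a := by
  rw [betaFn_eq ha]
  have h1 : 0 < Real.Gamma a := Real.Gamma_pos_of_pos (by linarith)
  have h2 : 0 < Real.Gamma (2*a) := Real.Gamma_pos_of_pos (by linarith)
  positivity

lemma sigma_sq {m : ℝ} (hm : 0 < m) : ((8*m) ^ (-(1:ℝ)/2))^2 = (8*m)⁻¹ := by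
  rw [← Real.rpow_natCast ((8*m) ^ (-(1:ℝ)/2)) 2, ← Real.rpow_mul (by positivity),
    show (-(1:ℝ)/2)*((2:ℕ):ℝ) = -1 by norm_num, Real.rpow_neg_one]

lemma ratio_eq {δ a : ℝ} (hδ : -1 ≤ δ) (ha : 2 ≤ a) {x : ℝ} (hx : x ∈ Set.Ioo (0:ℝ) 1) :
    betaSymPDF a x / gaussPDF ((8 * (a + δ)) ^ (-(1:ℝ) / 2)) x
      = (betaFn a a)⁻¹ * Real.sqrt (Real.pi/(4*(a+δ)))
        * Real.exp ((a-1) * Real.log (x*(1-x)) + 4*(a+δ)*(x-1/2)^2) := by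
  obtain ⟨hx0, hx1⟩ := hx
  have hm : 0 < a + δ := by linarith
  have h1x : 0 < 1 - x := by linarith
  unfold betaSymPDF gaussPDF
  rw [show (8 * (a + δ)) = 8*(a+δ) by ring, sigma_sq hm]
  have h2 : 2*Real.pi*(8*(a+δ))⁻¹ = Real.pi/(4*(a+δ)) := by
    field_simp; ring
  have h3 : -(x-1/2)^2 / (2*(8*(a+δ))⁻¹) = -(4*(a+δ)*(x-1/2)^2) := by
    field_simp; ring
  rw [h2, h3, Real.exp_neg]
  rw [Real.rpow_def_of_pos hx0, Real.rpow_def_of_pos h1x, Real.log_mul hx0.ne' h1x.ne']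
  have e : (a-1)*(Real.log x + Real.log (1-x)) + 4*(a+δ)*(x-1/2)^2
      = Real.log x*(a-1) + (Real.log (1-x)*(a-1) + 4*(a+δ)*(x-1/2)^2) := by ring
  rw [e, Real.exp_add, Real.exp_add]
  have hs : Real.sqrt (Real.pi/(4*(a+δ))) ≠ 0 := by positivity
  field_simp

lemma Rratio_eq {δ a : ℝ} (hδ : -1 ≤ δ) (ha : 2 ≤ a) :
    Rratio δ a = (betaFn a a)⁻¹ * Real.sqrt (Real.pi/(4*(a+δ)))
      * Real.exp ((a-1) * Real.log ((a-1)/(4*(a+δ))) + (δ+1)) := by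
  have hm : 0 < a + δ := by linarith
  have hp : 0 < a - 1 := by linarith
  have hd1 : 0 ≤ δ + 1 := by linarith
  have hB : 0 < betaFn a a := betaFn_pos (by linarith)
  set s : ℝ := (δ+1)/(4*(a+δ)) with hs
  have hs0 : 0 ≤ s := by positivity
  have hslt : s < 1/4 := by
    rw [hs, div_lt_iff₀ (by positivity)]; nlinarith
  have hsqrt_lt : Real.sqrt s < 1/2 := by
    have h := Real.sqrt_lt_sqrt hs0 hslt
    rwa [show (1/4:ℝ) = (1/2)^2 by norm_num, Real.sqrt_sq (by norm_num : (0:ℝ) ≤ 1/2)] at h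
  set xs : ℝ := 1/2 + Real.sqrt s with hxs
  have hxsI : xs ∈ Set.Ioo (0:ℝ) 1 := by
    constructor
    · have := Real.sqrt_nonneg s; rw [hxs]; linarith
    · rw [hxs]; linarith
  have hsq : Real.sqrt s ^ 2 = s := Real.sq_sqrt hs0
  have hxx : xs*(1-xs) = (a-1)/(4*(a+δ)) := by
    have e1 : xs*(1-xs) = 1/4 - Real.sqrt s^2 := by rw [hxs]; ring
    rw [e1, hsq, hs]
    field_simp
    ring
  have hxs2 : (xs-1/2)^2 = s := by
    rw [show xs - 1/2 = Real.sqrt s from by rw [hxs]; ring, hsq]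
  have h4ms : 4*(a+δ)*s = δ+1 := by rw [hs]; field_simp
  have hGmax : ∀ y, y ∈ Set.Ioo (0:ℝ) 1 →
      (a-1)*Real.log (y*(1-y)) + 4*(a+δ)*(y-1/2)^2
        ≤ (a-1)*Real.log ((a-1)/(4*(a+δ))) + (δ+1) := by
    intro y hy
    have hy0 := hy.1
    have hy1 : 0 < 1 - y := by linarith [hy.2]
    have hyy : 0 < y*(1-y) := by positivity
    have hystar : 0 < (a-1)/(4*(a+δ)) := by positivity
    have hlog := Real.log_le_sub_one_of_pos (x := (y*(1-y))/((a-1)/(4*(a+δ)))) (by positivity)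
    rw [Real.log_div hyy.ne' hystar.ne'] at hlog
    have e1 : y*(1-y)/((a-1)/(4*(a+δ))) = (4*(a+δ))*(y*(1-y))/(a-1) := by
      rw [div_div_eq_mul_div]; ring
    rw [e1] at hlog
    have h3 := mul_le_mul_of_nonneg_left hlog hp.le
    have e3 : (a-1)*((4*(a+δ))*(y*(1-y))/(a-1) - 1) = 4*(a+δ)*(y*(1-y)) - (a-1) := by
      field_simp
    rw [e3] at h3
    have e2 : (y-1/2)^2 = 1/4 - y*(1-y) := by ring
    rw [e2]
    nlinarith [h3]
  set K : ℝ := (betaFn a a)⁻¹ * Real.sqrt (Real.pi/(4*(a+δ))) with hK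
  have hKpos : 0 < K := by rw [hK]; positivity
  set V : ℝ := K * Real.exp ((a-1) * Real.log ((a-1)/(4*(a+δ))) + (δ+1)) with hV
  have hub : ∀ z : Set.Ioo (0:ℝ) 1,
      betaSymPDF a z / gaussPDF ((8 * (a + δ)) ^ (-(1:ℝ) / 2)) z ≤ V := by
    rintro ⟨z, hz⟩
    rw [ratio_eq hδ ha hz]
    rw [hV]
    exact mul_le_mul_of_nonneg_left (Real.exp_le_exp.2 (hGmax z hz)) hKpos.le
  have hval : betaSymPDF a xs / gaussPDF ((8 * (a + δ)) ^ (-(1:ℝ) / 2)) xs = V := by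
    rw [ratio_eq hδ ha hxsI, hxx, hxs2, h4ms, hV]
  haveI : Nonempty (Set.Ioo (0:ℝ) 1) := ⟨⟨1/2, by norm_num⟩⟩
  refine le_antisymm (ciSup_le hub) ?_
  have hbdd : BddAbove (Set.range (fun z : Set.Ioo (0:ℝ) 1 =>
      betaSymPDF a z / gaussPDF ((8 * (a + δ)) ^ (-(1:ℝ) / 2)) z)) := by
    refine ⟨V, ?_⟩
    rintro v ⟨z, rfl⟩
    exact hub z
  have := le_ciSup hbdd (⟨xs, hxsI⟩ : Set.Ioo (0:ℝ) 1)
  rw [hval] at this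
  exact this


lemma betaFn_eq2 {a : ℝ} (ha : 1 < a) :
    betaFn a a = Real.Gamma a * ((2:ℝ)^(1-2*a) * Real.sqrt Real.pi) / Real.Gamma (a+1/2) := by
  have hGa : 0 < Real.Gamma a := Real.Gamma_pos_of_pos (by linarith)
  have hGh : 0 < Real.Gamma (a+1/2) := Real.Gamma_pos_of_pos (by linarith)
  have hG2 : 0 < Real.Gamma (2*a) := Real.Gamma_pos_of_pos (by linarith)
  have hdup := Real.Gamma_mul_Gamma_add_half a
  rw [betaFn_eq ha, div_eq_div_iff hG2.ne' hGh.ne']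
  linear_combination Real.Gamma a * hdup

lemma log_betaFn {a : ℝ} (ha : 1 < a) :
    Real.log (betaFn a a) = Real.log (Real.Gamma a) - Real.log (Real.Gamma (a+1/2))
      + (1-2*a)*Real.log 2 + (1/2)*Real.log Real.pi := by
  have hGa : 0 < Real.Gamma a := Real.Gamma_pos_of_pos (by linarith)
  have hGh : 0 < Real.Gamma (a+1/2) := Real.Gamma_pos_of_pos (by linarith)
  have hrp : (0:ℝ) < (2:ℝ)^(1-2*a) := Real.rpow_pos_of_pos (by norm_num) _
  have hsp : (0:ℝ) < Real.sqrt Real.pi := Real.sqrt_pos.2 Real.pi_pos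
  rw [betaFn_eq2 ha, Real.log_div (by positivity) hGh.ne',
    Real.log_mul hGa.ne' (by positivity), Real.log_mul hrp.ne' hsp.ne',
    Real.log_rpow (by norm_num), Real.log_sqrt Real.pi_pos.le]
  ring

lemma log_V {δ a : ℝ} (hδ : -1 ≤ δ) (ha : 2 ≤ a) :
    Real.log ((betaFn a a)⁻¹ * Real.sqrt (Real.pi/(4*(a+δ)))
        * Real.exp ((a-1) * Real.log ((a-1)/(4*(a+δ))) + (δ+1)))
      = (Real.log (Real.Gamma (a+1/2)) - Real.log (Real.Gamma a))
        - (1/2)*Real.log (a+δ) + (a-1)*Real.log (a-1) - (a-1)*Real.log (a+δ) + (δ+1) := by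
  have hm : 0 < a + δ := by linarith
  have hp : 0 < a - 1 := by linarith
  have hB : 0 < betaFn a a := by
    rw [betaFn_eq (by linarith : 1 < a)]
    have h1 : 0 < Real.Gamma a := Real.Gamma_pos_of_pos (by linarith)
    have h2 : 0 < Real.Gamma (2*a) := Real.Gamma_pos_of_pos (by linarith)
    positivity
  have hsq : 0 < Real.sqrt (Real.pi/(4*(a+δ))) := Real.sqrt_pos.2 (by positivity)
  rw [Real.log_mul (by positivity) (Real.exp_ne_zero _),
    Real.log_mul (inv_ne_zero hB.ne') hsq.ne', Real.log_exp, Real.log_inv,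
    Real.log_sqrt (by positivity), Real.log_div Real.pi_ne_zero (by positivity),
    Real.log_div hp.ne' (by positivity : (4*(a+δ)) ≠ 0),
    show (4:ℝ)*(a+δ) = 4*(a+δ) by ring]
  rw [Real.log_mul (by norm_num : (4:ℝ) ≠ 0) hm.ne',
    show (4:ℝ) = 2^(2:ℕ) by norm_num, Real.log_pow, log_betaFn (by linarith : 1 < a)]
  push_cast
  ring


lemma log_taylor2 {t : ℝ} (ht : |t| ≤ 1/2) :
    |Real.log (1-t) + t + t^2/2| ≤ 2*|t|^3 := by
  have hlt : |t| < 1 := lt_of_le_of_lt ht (by norm_num)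
  have h := Real.abs_log_sub_add_sum_range_le hlt 2
  rw [Finset.sum_range_succ, Finset.sum_range_succ, Finset.sum_range_zero] at h
  norm_num at h
  have e : t + t^2/2 + Real.log (1-t) = Real.log (1-t) + t + t^2/2 := by ring
  rw [e] at h
  have h2 : |t|^3/(1-|t|) ≤ 2*|t|^3 := by
    rw [div_le_iff₀ (by linarith)]
    have h3 : (0:ℝ) ≤ |t|^3 := by positivity
    nlinarith
  exact h.trans h2

set_option maxHeartbeats 1000000 in
lemma elem_bound (δ : ℝ) (hδ : -1 ≤ δ) {a : ℝ} (ha : 4*|δ| + 8 ≤ a) :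
    |(1/2)*Real.log (a-1/4) - (1/2)*Real.log (a+δ) + (a-1)*Real.log (a-1)
      - (a-1)*Real.log (a+δ) + (δ+1) - (δ*(δ+1)+3/4)/(2*a)|
      ≤ 21*(1+|δ|)^3/a^2 := by
  have habs : 0 ≤ |δ| := abs_nonneg δ
  have ha8 : (8:ℝ) ≤ a := by linarith
  have ha0 : (0:ℝ) < a := by linarith
  have hdle : δ ≤ |δ| := le_abs_self δ
  have hdge : -|δ| ≤ δ := neg_abs_le δ
  have hdq : |δ| ≤ a/4 := by linarith
  have hm0 : 0 < a + δ := by linarith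
  have hm_lb : a/2 ≤ a + δ := by linarith
  have hp : 0 < a - 1 := by linarith
  have hp4 : 0 < a - 1/4 := by linarith
  set D : ℝ := 1 + |δ| with hD
  have hD1 : (1:ℝ) ≤ D := by rw [hD]; linarith
  have hD0 : (0:ℝ) < D := by linarith
  set u : ℝ := (1+δ)/(a+δ) with hu
  set v : ℝ := (δ+1/4)/(a+δ) with hv
  have hu0 : 0 ≤ u := div_nonneg (by linarith) hm0.le
  have hu_le : u ≤ 2*D/a := by
    rw [hu, div_le_div_iff₀ hm0 ha0]; nlinarith
  have hu_abs : |u| ≤ 2*D/a := by rwa [abs_of_nonneg hu0]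
  have hv_abs : |v| ≤ 2*D/a := by
    rw [hv, abs_div, abs_of_pos hm0, div_le_div_iff₀ hm0 ha0]
    have := abs_add_le δ (1/4:ℝ)
    have h14 : |(1/4:ℝ)| = 1/4 := by norm_num
    nlinarith [this, h14 ▸ this]
  have h2Da : 2*D/a ≤ 1/2 := by
    rw [div_le_div_iff₀ ha0 (by norm_num)]; rw [hD]; linarith
  have hu_half : |u| ≤ 1/2 := hu_abs.trans h2Da
  have hv_half : |v| ≤ 1/2 := hv_abs.trans h2Da
  set Eu : ℝ := Real.log (1-u) + u + u^2/2 with hEu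
  set Ev : ℝ := Real.log (1-v) + v + v^2/2 with hEv
  have hEu_b : |Eu| ≤ 2*|u|^3 := log_taylor2 hu_half
  have hEv_b : |Ev| ≤ 2*|v|^3 := log_taylor2 hv_half
  have e_u : Real.log (a-1) = Real.log (a+δ) + Real.log (1-u) := by
    have h1u : (1:ℝ) - u = (a-1)/(a+δ) := by
      rw [hu]; field_simp; ring
    rw [h1u, Real.log_div hp.ne' hm0.ne']; ring
  have e_v : Real.log (a-1/4) = Real.log (a+δ) + Real.log (1-v) := by
    have h1v : (1:ℝ) - v = (a-1/4)/(a+δ) := by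
      rw [hv]; field_simp; ring
    rw [h1v, Real.log_div hp4.ne' hm0.ne']; ring
  set T : ℝ := δ*(δ+1)+3/4 with hT
  have hT0 : 0 < T := by rw [hT]; nlinarith [sq_nonneg (δ + 1/2)]
  have hTD : T ≤ D^2 := by rw [hT, hD]; nlinarith [sq_abs δ]
  have key : (1/2)*Real.log (a-1/4) - (1/2)*Real.log (a+δ) + (a-1)*Real.log (a-1)
      - (a-1)*Real.log (a+δ) + (δ+1) - T/(2*a)
      = -(T*δ)/(2*a*(a+δ)) - v^2/4 + (1+δ)^3/(2*(a+δ)^2) + Ev/2 + (a-1)*Eu := by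
    have l1 : Real.log (1-u) = Eu - u - u^2/2 := by rw [hEu]; ring
    have l2 : Real.log (1-v) = Ev - v - v^2/2 := by rw [hEv]; ring
    rw [e_u, e_v, l1, l2, hu, hv, hT]
    field_simp
    ring
  rw [key]
  -- term bounds
  have b1 : |(-(T*δ)/(2*a*(a+δ)))| ≤ D^3/a^2 := by
    rw [abs_div, abs_neg, abs_mul, abs_of_pos hT0, abs_of_pos (by positivity : (0:ℝ) < 2*a*(a+δ))]
    have hTd : T*|δ| ≤ D^3 := by
      calc T*|δ| ≤ D^2*D := mul_le_mul hTD (by rw [hD]; linarith) habs (by positivity)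
        _ = D^3 := by ring
    have ha2m : a^2 ≤ 2*a*(a+δ) := by
      have h := mul_le_mul_of_nonneg_left (show a ≤ 2*(a+δ) by linarith) ha0.le
      rw [pow_two]; linarith
    exact div_le_div₀ (by positivity) hTd (by positivity) ha2m
  have hv3 : |v|^3 ≤ (2*D/a)^3 := pow_le_pow_left₀ (abs_nonneg v) hv_abs 3
  have hu3 : |u|^3 ≤ (2*D/a)^3 := pow_le_pow_left₀ (abs_nonneg u) hu_abs 3
  have b2 : |v^2/4| ≤ D^3/a^2 := by
    have hv2 : v^2 ≤ (2*D/a)^2 := by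
      have := pow_le_pow_left₀ (abs_nonneg v) hv_abs 2
      rwa [sq_abs] at this
    have e2 : (2*D/a)^2/4 = D^2/a^2 := by ring
    have h2 : D^2/a^2 ≤ D^3/a^2 := by
      apply div_le_div_of_nonneg_right ?_ (by positivity)
      · nlinarith
    rw [abs_of_nonneg (by positivity)]
    calc v^2/4 ≤ (2*D/a)^2/4 := by linarith
      _ = D^2/a^2 := e2
      _ ≤ D^3/a^2 := h2
  have b3 : |(1+δ)^3/(2*(a+δ)^2)| ≤ 2*D^3/a^2 := by
    have h1d : (0:ℝ) ≤ 1+δ := by linarith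
    have h1dD : 1+δ ≤ D := by rw [hD]; linarith
    have hcube : (1+δ)^3 ≤ D^3 := pow_le_pow_left₀ h1d h1dD 3
    have hmsq : a^2/4 ≤ (a+δ)^2 := by
      have h := pow_le_pow_left₀ (by linarith : (0:ℝ) ≤ a/2) hm_lb 2
      calc a^2/4 = (a/2)^2 := by ring
        _ ≤ (a+δ)^2 := h
    rw [abs_of_nonneg (div_nonneg (pow_nonneg h1d 3) (by positivity)),
      div_le_div_iff₀ (by positivity) (by positivity)]
    calc (1+δ)^3*a^2 ≤ D^3*a^2 := mul_le_mul_of_nonneg_right hcube (sq_nonneg a)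
      _ ≤ D^3*(4*(a+δ)^2) := mul_le_mul_of_nonneg_left (by linarith) (pow_nonneg hD0.le 3)
      _ = 2*D^3*(2*(a+δ)^2) := by ring
  have b4 : |Ev/2| ≤ D^3/a^2 := by
    have e3 : (2*D/a)^3 = 8*D^3/a^3 := by ring
    have h3 : 8*D^3/a^3 ≤ D^3/a^2 := by
      rw [div_le_div_iff₀ (by positivity) (by positivity)]
      calc 8*D^3*a^2 = (D^3*a^2)*8 := by ring
        _ ≤ (D^3*a^2)*a := mul_le_mul_of_nonneg_left ha8 (by positivity)
        _ = D^3*a^3 := by ring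
    rw [abs_div]
    norm_num
    calc |Ev|/2 ≤ |v|^3 := by linarith
      _ ≤ (2*D/a)^3 := hv3
      _ = 8*D^3/a^3 := e3
      _ ≤ D^3/a^2 := h3
  have b5 : |(a-1)*Eu| ≤ 16*D^3/a^2 := by
    rw [abs_mul, abs_of_pos hp]
    have h1 : |Eu| ≤ 2*(2*D/a)^3 :=
      hEu_b.trans (mul_le_mul_of_nonneg_left hu3 (by norm_num))
    have h2 : (a-1)*|Eu| ≤ a*(2*(2*D/a)^3) :=
      mul_le_mul (by linarith) h1 (abs_nonneg _) ha0.le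
    have e4 : a*(2*(2*D/a)^3) = 16*D^3/a^2 := by field_simp; ring
    linarith [e4 ▸ h2]
  calc |(-(T*δ)/(2*a*(a+δ)) - v^2/4 + (1+δ)^3/(2*(a+δ)^2) + Ev/2 + (a-1)*Eu)|
      ≤ |(-(T*δ)/(2*a*(a+δ)) - v^2/4 + (1+δ)^3/(2*(a+δ)^2) + Ev/2)| + |(a-1)*Eu| := abs_add_le _ _
    _ ≤ |(-(T*δ)/(2*a*(a+δ)) - v^2/4 + (1+δ)^3/(2*(a+δ)^2))| + |Ev/2| + |(a-1)*Eu| := by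
        linarith [abs_add_le (-(T*δ)/(2*a*(a+δ)) - v^2/4 + (1+δ)^3/(2*(a+δ)^2)) (Ev/2)]
    _ ≤ |(-(T*δ)/(2*a*(a+δ)) - v^2/4)| + |(1+δ)^3/(2*(a+δ)^2)| + |Ev/2| + |(a-1)*Eu| := by
        linarith [abs_add_le (-(T*δ)/(2*a*(a+δ)) - v^2/4) ((1+δ)^3/(2*(a+δ)^2))]
    _ ≤ |(-(T*δ)/(2*a*(a+δ)))| + |v^2/4| + |(1+δ)^3/(2*(a+δ)^2)| + |Ev/2| + |(a-1)*Eu| := by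
        linarith [abs_sub (-(T*δ)/(2*a*(a+δ))) (v^2/4)]
    _ ≤ D^3/a^2 + D^3/a^2 + 2*D^3/a^2 + D^3/a^2 + 16*D^3/a^2 := by
        linarith [b1, b2, b3, b4, b5]
    _ = 21*D^3/a^2 := by ring

theorem logR_asymptotic (δ : ℝ) (hδ : -1 ≤ δ) :
    ∃ C > (0:ℝ), ∃ A > (1:ℝ), ∀ a ≥ A,
      |Real.log (Rratio δ a) - (δ * (δ + 1) + 3 / 4) / (2 * a)| ≤ C / a ^ 2 := by
  refine ⟨21*(1+|δ|)^3 + 1,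
    by have := pow_nonneg (by positivity : (0:ℝ) ≤ 1+|δ|) 3; linarith, 4*|δ| + 8,
    by linarith [abs_nonneg δ], fun a ha => ?_⟩
  have habs : 0 ≤ |δ| := abs_nonneg δ
  have ha8 : (8:ℝ) ≤ a := by linarith
  have ha2 : (2:ℝ) ≤ a := by linarith
  have ha0 : (0:ℝ) < a := by linarith
  rw [Rratio_eq hδ ha2, log_V hδ ha2]
  obtain ⟨hL1, hL2⟩ := L_approx (x := a) ha2
  have hE := elem_bound δ hδ (a := a) ha
  have hA : |(Real.log (Real.Gamma (a+1/2)) - Real.log (Real.Gamma a))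
      - (1/2)*Real.log (a-1/4)| ≤ 1/a^2 := by
    rw [abs_of_nonneg hL1]
    refine hL2.trans ?_
    rw [div_le_div_iff₀ (by nlinarith : (0:ℝ) < 32*(a-1)^2) (by positivity)]
    have h := pow_le_pow_left₀ (by linarith : (0:ℝ) ≤ a/2) (by linarith : a/2 ≤ a-1) 2
    have e : (a/2)^2 = a^2/4 := by ring
    nlinarith [h]
  have hsplit : (Real.log (Real.Gamma (a+1/2)) - Real.log (Real.Gamma a))
        - (1/2)*Real.log (a+δ) + (a-1)*Real.log (a-1) - (a-1)*Real.log (a+δ) + (δ+1)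
        - (δ * (δ + 1) + 3 / 4) / (2 * a)
      = ((Real.log (Real.Gamma (a+1/2)) - Real.log (Real.Gamma a)) - (1/2)*Real.log (a-1/4))
        + ((1/2)*Real.log (a-1/4) - (1/2)*Real.log (a+δ) + (a-1)*Real.log (a-1)
          - (a-1)*Real.log (a+δ) + (δ+1) - (δ*(δ+1)+3/4)/(2*a)) := by ring
  calc |(Real.log (Real.Gamma (a+1/2)) - Real.log (Real.Gamma a))
        - (1/2)*Real.log (a+δ) + (a-1)*Real.log (a-1) - (a-1)*Real.log (a+δ) + (δ+1)
        - (δ * (δ + 1) + 3 / 4) / (2 * a)|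
      = |((Real.log (Real.Gamma (a+1/2)) - Real.log (Real.Gamma a)) - (1/2)*Real.log (a-1/4))
        + ((1/2)*Real.log (a-1/4) - (1/2)*Real.log (a+δ) + (a-1)*Real.log (a-1)
          - (a-1)*Real.log (a+δ) + (δ+1) - (δ*(δ+1)+3/4)/(2*a))| := by rw [hsplit]
    _ ≤ |(Real.log (Real.Gamma (a+1/2)) - Real.log (Real.Gamma a)) - (1/2)*Real.log (a-1/4)|
        + |(1/2)*Real.log (a-1/4) - (1/2)*Real.log (a+δ) + (a-1)*Real.log (a-1)
          - (a-1)*Real.log (a+δ) + (δ+1) - (δ*(δ+1)+3/4)/(2*a)| := abs_add_le _ _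
    _ ≤ 1/a^2 + 21*(1+|δ|)^3/a^2 := add_le_add hA hE
    _ = (21*(1+|δ|)^3 + 1)/a^2 := by ring
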